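/- For any feasible MSPEC power assignment (p*_v), the set K = {v(i) : v ∈ V, 0 ≤ i < ⌈p*_v/α⌉} is an s-t vertex cut of the discretized graph G′; hence the minimum s-t vertex cut K* of G′ satisfies |K*| ≤ Σ_{v∈V} ⌈p*_v/α⌉. -/

import Mathlib

open Finset

variable {α : Type*}

/-- The graph of surviving edges: an edge of `G` survives the power assignment `p`
iff `p u + p v < w (u,v)`; edges with `p u + p v ≥ w` are removed. -/
def cutGraph (G : SimpleGraph α) (w : Sym2 α → ℝ) (p : α → ℝ) : SimpleGraph α where
  Adj u v := G.Adj u v ∧ p u + p v < w s(u, v)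
  symm := by
    constructor
    intro u v h
    refine ⟨h.1.symm, ?_⟩
    rw [Sym2.eq_swap]
    linarith [h.2]
  loopless := ⟨fun u h => G.loopless.1 u h.1⟩

/-- MSPEC feasibility: `p s = p t = 0`, powers nonnegative, and removing the
edges `(u,v)` with `p u + p v ≥ w (u,v)` disconnects `s` from `t`. -/
def Feasible (G : SimpleGraph α) (w : Sym2 α → ℝ) (s t : α) (p : α → ℝ) : Prop :=
  p s = 0 ∧ p t = 0 ∧ (∀ v, 0 ≤ p v) ∧ ¬ (cutGraph G w p).Reachable s t

/-- The uniform (bottleneck) power assignment: power `q` on every vertex of `V`,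
and `0` on `s` and `t`. -/
def uniformP [DecidableEq α] (s t : α) (q : ℝ) : α → ℝ :=
  fun v => if v = s ∨ v = t then 0 else q

/-- Deleting a vertex set `K` from a graph (all edges incident to `K` disappear). -/
def delV (H : SimpleGraph α) (K : Set α) : SimpleGraph α where
  Adj u v := H.Adj u v ∧ u ∉ K ∧ v ∉ K
  symm := ⟨fun u v h => ⟨h.1.symm, h.2.2, h.2.1⟩⟩
  loopless := ⟨fun u h => H.loopless.1 u h.1⟩

/-- `K` is an `s`-`t` vertex cut of `H`. -/
def IsCut (H : SimpleGraph α) (s t : α) (K : Set α) : Prop :=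
  s ∉ K ∧ t ∉ K ∧ ¬ (delV H K).Reachable s t

/-- The power represented by a copy-vertex of the discretized graph:
copy `(v, i)` represents power `i * al` (and copies of `s`, `t` have power `0`). -/
def copyPow [DecidableEq α] (s t : α) (al : ℝ) (a : α × ℕ) : ℝ :=
  if a.1 = s ∨ a.1 = t then 0 else a.2 * al

/-- Validity of a copy-vertex: each `v ∈ V` has copies `v(0), …, v(c-1)`,
while `s` and `t` are represented by their `0`-th copy only. -/
def copyValid [DecidableEq α] (s t : α) (c : ℕ) (a : α × ℕ) : Prop :=
  if a.1 = s ∨ a.1 = t then a.2 = 0 else a.2 < c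

/-- The discretized graph `G'`: vertices are copies `v(i)`; there is an edge
`(u(i), v(j))` iff `(u,v)` is an edge of `G` and `iα + jα < w (u,v)`
(copies of `s`, `t` count with power `0`). -/
def discGraph [DecidableEq α] (G : SimpleGraph α) (w : Sym2 α → ℝ) (s t : α) (al : ℝ)
    (c : ℕ) : SimpleGraph (α × ℕ) where
  Adj a b := copyValid s t c a ∧ copyValid s t c b ∧ G.Adj a.1 b.1 ∧
      copyPow s t al a + copyPow s t al b < w s(a.1, b.1)
  symm := by
    constructor
    intro a b h
    refine ⟨h.2.1, h.1, h.2.2.1.symm, ?_⟩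
    rw [Sym2.eq_swap]
    linarith [h.2.2.2]
  loopless := ⟨fun a h => G.loopless.1 a.1 h.2.2.1⟩

/-- A set of vertices of the discretized graph consisting only of valid copies of
vertices of `V` (i.e. copy-vertices, excluding `s` and `t`). -/
def AllowedCut (s t : α) (c : ℕ) (K : Set (α × ℕ)) : Prop :=
  ∀ a ∈ K, a.1 ≠ s ∧ a.1 ≠ t ∧ a.2 < c

/-- for any feasible MSPEC assignment `p*`, the set of the first
`⌈p*_v/α⌉` copies of each vertex is an `s`-`t` vertex cut of `G'`; hence any minimum
`s`-`t` vertex cut `K*` of `G'` satisfies `|K*| ≤ Σ_v ⌈p*_v/α⌉`. -/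
theorem cut_from_feasible_solution [Fintype α] [DecidableEq α]
    (G : SimpleGraph α) (w : Sym2 α → ℝ) (s t : α) (hst : s ≠ t)
    (al : ℝ) (hal : 0 < al) (c : ℕ)
    (p : α → ℝ) (hp : Feasible G w s t p)
    (hc : ∀ v, ⌈p v / al⌉₊ ≤ c) :
    IsCut (discGraph G w s t al c) (s, 0) (t, 0)
      {a : α × ℕ | a.1 ≠ s ∧ a.1 ≠ t ∧ a.2 < ⌈p a.1 / al⌉₊} ∧
    ∀ Kstar : Set (α × ℕ),
      IsCut (discGraph G w s t al c) (s, 0) (t, 0) Kstar →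
      (∀ K', IsCut (discGraph G w s t al c) (s, 0) (t, 0) K' → K'.Finite →
        Kstar.ncard ≤ K'.ncard) →
      Kstar.ncard ≤ ∑ v, (if v = s ∨ v = t then 0 else ⌈p v / al⌉₊) := by
  classical
  set K : Set (α × ℕ) := {a : α × ℕ | a.1 ≠ s ∧ a.1 ≠ t ∧ a.2 < ⌈p a.1 / al⌉₊} with hK
  obtain ⟨hps, hpt, hpnn, hreach⟩ := hp
  -- main claim: K is a cut
  have hpow : ∀ a : α × ℕ, a ∉ K → p a.1 ≤ copyPow s t al a := by
    intro a ha
    by_cases h1 : a.1 = s ∨ a.1 = t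
    · have : p a.1 = 0 := by rcases h1 with h | h <;> rw [h] <;> assumption
      simp [copyPow, h1, this]
    · push_neg at h1
      have h2 : ¬ a.2 < ⌈p a.1 / al⌉₊ := by
        intro h2; exact ha ⟨h1.1, h1.2, h2⟩
      have h3 : p a.1 / al ≤ (a.2 : ℝ) := by
        have := Nat.ceil_le.mp (not_lt.mp h2)
        exact_mod_cast this
      have : p a.1 ≤ (a.2 : ℝ) * al := (div_le_iff₀ hal).mp h3
      simpa [copyPow, h1.1, h1.2] using this
  have hcut : IsCut (discGraph G w s t al c) (s, 0) (t, 0) K := by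
    refine ⟨fun h => h.1 rfl, fun h => h.2.1 rfl, ?_⟩
    intro hR
    apply hreach
    let hom : delV (discGraph G w s t al c) K →g cutGraph G w p :=
      ⟨Prod.fst, fun {a b} h => show G.Adj a.1 b.1 ∧ p a.1 + p b.1 < w s(a.1, b.1) from
        ⟨h.1.2.2.1, lt_of_le_of_lt (add_le_add (hpow a h.2.1) (hpow b h.2.2)) h.1.2.2.2⟩⟩
    exact hR.map hom
  refine ⟨hcut, ?_⟩
  intro Kstar hKstar hmin
  -- K as a finset
  set F : Finset (α × ℕ) :=
    Finset.univ.biUnion (fun v =>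
      (Finset.range (if v = s ∨ v = t then 0 else ⌈p v / al⌉₊)).image (Prod.mk v)) with hF
  have hKF : K = ↑F := by
    ext a
    constructor
    · rintro ⟨h1, h2, h3⟩
      refine Finset.mem_coe.mpr (Finset.mem_biUnion.mpr ⟨a.1, Finset.mem_univ _,
        Finset.mem_image.mpr ⟨a.2, Finset.mem_range.mpr ?_, rfl⟩⟩)
      simp [h1, h2, h3]
    · intro h
      obtain ⟨v, -, hv⟩ := Finset.mem_biUnion.mp (Finset.mem_coe.mp h)
      obtain ⟨i, hi, rfl⟩ := Finset.mem_image.mp hv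
      rw [Finset.mem_range] at hi
      by_cases h1 : v = s ∨ v = t
      · simp [h1] at hi
      · push_neg at h1
        rw [if_neg (by push_neg; exact h1)] at hi
        exact ⟨h1.1, h1.2, hi⟩
  have hFin : K.Finite := hKF ▸ F.finite_toSet
  have hcard : K.ncard = F.card := by rw [hKF, Set.ncard_coe_finset]
  have hFcard : F.card = ∑ v, (if v = s ∨ v = t then 0 else ⌈p v / al⌉₊) := by
    rw [hF, Finset.card_biUnion]
    · refine Finset.sum_congr rfl fun v _ => ?_
      rw [Finset.card_image_of_injective _ (fun i j h => by simpa using h)]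
      · exact Finset.card_range _
    · intro x _ y _ hxy
      simp only [Finset.disjoint_left, Finset.mem_image, Finset.mem_range]
      rintro a ⟨i, _, rfl⟩ ⟨j, _, h⟩
      exact hxy (congrArg Prod.fst h).symm
  calc Kstar.ncard ≤ K.ncard := hmin K hcut hFin
    _ = _ := by rw [hcard, hFcard]
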